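/- Let p, q ∈ ℕ be primes with 2 < q < p and let a, b ∈ ℤ. (i) If b ≡ 0 (mod p), then [q]^{−a}([q][p])^{b}[p]^{−b} is the identity of S_p if and only if a ≡ 0 (mod q). (ii) If b ≡ 1 (mod p), then [q]^{−a}([q][p])^{b}[p]^{−b} is the identity of S_p if and only if a ≡ 1 (mod q). -/
import Mathlib


/-- The cyclic permutation `[n] = (1,2,…,n)` considered as an element of the symmetric
group `S_p` on the `p` points `{0,…,p-1}` (written 0-indexed): it maps `i ↦ i + 1` for
`i < n - 1`, maps `n - 1 ↦ 0` and fixes all points `n, …, p - 1`. -/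
def cyc (p n : ℕ) : Equiv.Perm (Fin p) :=
  if h : n - 1 < p then Fin.cycleRange ⟨n - 1, h⟩ else 1

-- helper: order of cyc p n
lemma orderOf_cyc {p n : ℕ} (h1 : 1 < n) (hnp : n ≤ p) : orderOf (cyc p n) = n := by
  obtain ⟨m, rfl⟩ : ∃ m, p = m + 1 := ⟨p - 1, by omega⟩
  have h : n - 1 < m + 1 := by omega
  rw [cyc, dif_pos h]
  have h0 : (⟨n-1, h⟩ : Fin (m+1)) ≠ 0 := by
    simp [Fin.ext_iff]; omega
  rw [← Equiv.Perm.lcm_cycleType, Fin.cycleType_cycleRange h0]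
  simp; omega

lemma cycP_val {m : ℕ} (x : Fin (m+1)) :
    ((cyc (m+1) (m+1)) x : ℕ) = if (x : ℕ) = m then 0 else (x : ℕ) + 1 := by
  have h : (m+1) - 1 < m + 1 := by omega
  rw [cyc, dif_pos h]
  have : (⟨(m+1)-1, h⟩ : Fin (m+1)) = Fin.last m := by ext; simp
  rw [this, Fin.cycleRange_last, coe_finRotate]
  simp [Fin.ext_iff, Fin.last]

lemma cycQ_val {m q : ℕ} (h2q : 2 < q) (hqp : q < m + 1) (x : Fin (m+1)) :
    ((cyc (m+1) q) x : ℕ) =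
      if (x : ℕ) < q - 1 then (x : ℕ) + 1 else if (x : ℕ) = q - 1 then 0 else (x : ℕ) := by
  have h : q - 1 < m + 1 := by omega
  rw [cyc, dif_pos h]
  set i : Fin (m+1) := ⟨q-1, h⟩ with hi
  rcases lt_trichotomy (x : ℕ) (q-1) with hc | hc | hc
  · rw [Fin.cycleRange_of_lt (show x < i from hc), if_pos hc]
    rw [Fin.val_add_one_of_lt (show x < Fin.last m by simp [Fin.lt_def]; omega)]
  · rw [Fin.cycleRange_of_eq (show x = i by ext; exact hc)]
    simp [hc]
  · rw [Fin.cycleRange_of_gt (show i < x from hc)]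
    rw [if_neg (by omega), if_neg (by omega)]

/-- the "multiplication by 2 mod q" permutation of `Fin p` (identity above `q`). -/
def dbl (p q : ℕ) (h0 : 0 < q) (hqp : q < p) (hodd : q % 2 = 1) : Equiv.Perm (Fin p) where
  toFun x := if (x : ℕ) < q then ⟨2 * x % q, (Nat.mod_lt _ h0).trans hqp⟩ else x
  invFun x := if (x : ℕ) < q then ⟨(q+1)/2 * x % q, (Nat.mod_lt _ h0).trans hqp⟩ else x
  left_inv x := by
    by_cases hx : (x : ℕ) < q
    · simp only [hx, if_pos, Nat.mod_lt _ h0, Fin.ext_iff]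
      rw [Nat.mul_mod, Nat.mod_mod_of_dvd _ dvd_rfl, ← Nat.mul_mod, ← mul_assoc]
      have h2 : (q+1)/2 * 2 = q + 1 := by omega
      calc (q+1)/2 * 2 * (x:ℕ) % q = (q * (x:ℕ) + (x:ℕ)) % q := by rw [h2]; ring_nf
        _ = (x : ℕ) := by rw [Nat.mul_add_mod]; exact Nat.mod_eq_of_lt hx
    · simp [hx]
  right_inv x := by
    by_cases hx : (x : ℕ) < q
    · simp only [hx, if_pos, Nat.mod_lt _ h0, Fin.ext_iff]
      rw [Nat.mul_mod, Nat.mod_mod_of_dvd _ dvd_rfl, ← Nat.mul_mod, ← mul_assoc]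
      have h2 : 2 * ((q+1)/2) = q + 1 := by omega
      calc 2 * ((q+1)/2) * (x:ℕ) % q = (q * (x:ℕ) + (x:ℕ)) % q := by rw [h2]; ring_nf
        _ = (x : ℕ) := by rw [Nat.mul_add_mod]; exact Nat.mod_eq_of_lt hx
    · simp [hx]

lemma dbl_val {p q : ℕ} (h0 : 0 < q) (hqp : q < p) (hodd : q % 2 = 1) (x : Fin p) :
    ((dbl p q h0 hqp hodd) x : ℕ) = if (x : ℕ) < q then 2 * x % q else x := by
  simp only [dbl, Equiv.coe_fn_mk]
  split <;> rfl

lemma conj_point {m q : ℕ} (h0 : 0 < q) (h2q : 2 < q) (hodd : q % 2 = 1) (hqp : q < m + 1)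
    (x : Fin (m+1)) :
    (cyc (m+1) (m+1) * cyc (m+1) q) (dbl (m+1) q h0 hqp hodd x)
      = dbl (m+1) q h0 hqp hodd (cyc (m+1) (m+1) x) := by
  apply Fin.val_injective
  rw [Equiv.Perm.mul_apply, cycP_val, cycQ_val h2q hqp, dbl_val, dbl_val, cycP_val]
  have hvm : (x : ℕ) < m + 1 := x.isLt
  set v := (x : ℕ) with hv
  have hqm : q ≤ m := by omega
  by_cases hA : v < q - 1
  · have hw1 : 2*v % q < q := Nat.mod_lt _ h0
    have hz1 : 2*(v+1) % q < q := Nat.mod_lt _ h0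
    have hw2 : (2*v < q ∧ 2*v % q = 2*v) ∨ (q ≤ 2*v ∧ 2*v % q = 2*v - q) := by
      rcases Nat.lt_or_ge (2*v) q with h | h
      · exact Or.inl ⟨h, Nat.mod_eq_of_lt h⟩
      · exact Or.inr ⟨h, (Nat.mod_eq_sub_mod h).trans (Nat.mod_eq_of_lt (by omega))⟩
    have hz2 : (2*(v+1) < q ∧ 2*(v+1) % q = 2*(v+1)) ∨
        (q ≤ 2*(v+1) ∧ 2*(v+1) % q = 2*(v+1) - q) := by
      rcases Nat.lt_or_ge (2*(v+1)) q with h | h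
      · exact Or.inl ⟨h, Nat.mod_eq_of_lt h⟩
      · exact Or.inr ⟨h, (Nat.mod_eq_sub_mod h).trans (Nat.mod_eq_of_lt (by omega))⟩
    rcases hw2 with ⟨h1, h2⟩ | ⟨h1, h2⟩ <;> rcases hz2 with ⟨h3, h4⟩ | ⟨h3, h4⟩ <;>
      split_ifs <;> omega
  · by_cases hB : v = q - 1
    · have hw1 : 2*v % q < q := Nat.mod_lt _ h0
      have hw2 : 2*v % q = 2*v - q := by
        have h : q ≤ 2*v := by omega
        exact (Nat.mod_eq_sub_mod h).trans (Nat.mod_eq_of_lt (by omega))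
      split_ifs <;> omega
    · by_cases hC : v = m
      · have h00 : 2 * 0 % q = 0 := by simp
        split_ifs <;> omega
      · split_ifs <;> omega

lemma conj_eq {m q : ℕ} (h0 : 0 < q) (h2q : 2 < q) (hodd : q % 2 = 1) (hqp : q < m + 1) :
    cyc (m+1) (m+1) * cyc (m+1) q
      = dbl (m+1) q h0 hqp hodd * cyc (m+1) (m+1) * (dbl (m+1) q h0 hqp hodd)⁻¹ := by
  have h : (cyc (m+1) (m+1) * cyc (m+1) q) * dbl (m+1) q h0 hqp hodd
      = dbl (m+1) q h0 hqp hodd * cyc (m+1) (m+1) := by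
    ext y
    simpa [Equiv.Perm.mul_apply] using congrArg Fin.val (conj_point h0 h2q hodd hqp y)
  rw [← h, mul_inv_cancel_right]


/-- Let `p, q` be primes with `2 < q < p` and `a, b ∈ ℤ`. Consider
the element `E = [q]^{−a}([q][p])^{b}[p]^{−b}` of `S_p` (products taken left to
right, so a paper product `x y` is `y * x` in Mathlib's convention
`(f * g) x = f (g x)`; in particular the paper's `[q][p]` is `cyc p p * cyc p q`).
(i) If `b ≡ 0 (mod p)` then `E = 1` if and only if `a ≡ 0 (mod q)`.
(ii) If `b ≡ 1 (mod p)` then `E = 1` if and only if `a ≡ 1 (mod q)`. -/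
theorem cyc_identity_iff_modEq (p q : ℕ) (hp : p.Prime) (hq : q.Prime) (h2q : 2 < q)
    (hqp : q < p) (a b : ℤ) :
    (b ≡ 0 [ZMOD (p : ℤ)] →
      ((cyc p p) ^ (-b) * (cyc p p * cyc p q) ^ b * (cyc p q) ^ (-a) = 1 ↔
        a ≡ 0 [ZMOD (q : ℤ)])) ∧
    (b ≡ 1 [ZMOD (p : ℤ)] →
      ((cyc p p) ^ (-b) * (cyc p p * cyc p q) ^ b * (cyc p q) ^ (-a) = 1 ↔
        a ≡ 1 [ZMOD (q : ℤ)])) := by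
  obtain ⟨m, rfl⟩ : ∃ m, p = m + 1 := ⟨p - 1, by omega⟩
  have h0 : 0 < q := by omega
  have hodd : q % 2 = 1 := Nat.odd_iff.mp (hq.odd_of_ne_two (by omega))
  set P := cyc (m+1) (m+1) with hPdef
  set Q := cyc (m+1) q with hQdef
  set R := dbl (m+1) q h0 hqp hodd with hRdef
  have hconj : P * Q = R * P * R⁻¹ := conj_eq h0 h2q hodd hqp
  have hP : orderOf P = m+1 := orderOf_cyc (by omega) le_rfl
  have hQ : orderOf Q = q := orderOf_cyc (by omega) (le_of_lt hqp)
  have hQpow : ∀ c : ℤ, (Q ^ c = 1 ↔ ((q:ℕ):ℤ) ∣ c) := by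
    intro c
    rw [← orderOf_dvd_iff_zpow_eq_one, hQ]
  constructor
  · intro hb
    have hdvd : (((m+1:ℕ)):ℤ) ∣ b := Int.modEq_zero_iff_dvd.mp hb
    have hPb : P ^ b = 1 := by
      rw [← orderOf_dvd_iff_zpow_eq_one, hP]
      exact_mod_cast hdvd
    have he : P ^ (-b) * (P * Q) ^ b * Q ^ (-a) = Q ^ (-a) := by
      rw [hconj, conj_zpow, hPb, zpow_neg, hPb]
      simp
    rw [he, hQpow, dvd_neg, ← Int.modEq_zero_iff_dvd]
  · intro hb
    have hdvd : (((m+1:ℕ)):ℤ) ∣ b - 1 := by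
      exact dvd_sub_comm.mp (Int.modEq_iff_dvd.mp hb)
    have hPb : P ^ b = P := by
      have h1 : P ^ (b - 1) = 1 := by
        rw [← orderOf_dvd_iff_zpow_eq_one, hP]
        exact_mod_cast hdvd
      calc P ^ b = P ^ (b - 1 + 1) := by ring_nf
        _ = P ^ (b-1) * P ^ (1:ℤ) := zpow_add _ _ _
        _ = P := by rw [h1, one_mul, zpow_one]
    have he : P ^ (-b) * (P * Q) ^ b * Q ^ (-a) = Q ^ (1 - a) := by
      rw [hconj, conj_zpow, hPb, ← hconj, zpow_neg, hPb]
      group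
    rw [he, hQpow, ← Int.modEq_iff_dvd]
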